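/- Let G be a finite connected simple graph with edge-weight function w : E(G) → ℕ, interdiction cost function c : E(G) → ℕ, and budget B ∈ ℕ, and let I ⊆ E(G) satisfy c(I) ≤ B. Fix a vertex v, let d(x) be the graph distance from v to x, for i ≥ 0 let E_i = { {x,y} ∈ E(G) : d(x) = i, d(y) = i+1 }, fix an integer k > 1, and for i ∈ {0,…,k−1} set F_i = ⋃_{j ≥ 0} E_{i+jk}; let G_i be the subgraph of G induced by E(G) \ F_i and H_i the subgraph induced by F_i. Then there exists i ∈ {0, 1, …, k−1} such that for all edge sets Î₁ ⊆ E(G) \ F_i and Î₂ ⊆ F_i with c(Î₁) ≤ c(I \ F_i), c(Î₂) ≤ c(I ∩ F_i), ν_w(G_i \ Î₁) ≤ ν_w(G_i \ (I \ F_i)), and ν_w(H_i \ Î₂) ≤ ν_w(H_i \ (I ∩ F_i)), one has c(Î₁ ∪ Î₂) ≤ B and k·ν_w(G \ (Î₁ ∪ Î₂)) ≤ (k+2)·ν_w(G \ I). -/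

import Mathlib

open scoped BigOperators

/-- `M` is a matching in the simple graph `G`: a set of edges of `G`, no two of
which share an endpoint. -/
def IsMatchingOn {V : Type*} (G : SimpleGraph V) (M : Set (Sym2 V)) : Prop :=
  M ⊆ G.edgeSet ∧ ∀ e ∈ M, ∀ f ∈ M, e ≠ f → ∀ v : V, v ∈ e → v ∉ f

/-- `nuW G w` is the maximum weight of a matching in `G` with respect to the
edge-weight function `w`. -/
noncomputable def nuW {V : Type*} (G : SimpleGraph V) (w : Sym2 V → ℕ) : ℕ :=
  sSup {n : ℕ | ∃ M : Set (Sym2 V), IsMatchingOn G M ∧ (∑ᶠ e ∈ M, w e) = n}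

/-- `levelEdges G v i` is the set of edges `{x, y}` of `G` with `d(x) = i` and
`d(y) = i + 1`, where `d` is the graph distance from `v`. -/
def levelEdges {V : Type*} (G : SimpleGraph V) (v : V) (i : ℕ) : Set (Sym2 V) :=
  {e : Sym2 V | e ∈ G.edgeSet ∧
    ∃ x y : V, e = s(x, y) ∧ G.dist v x = i ∧ G.dist v y = i + 1}

/-- `levelUnion G v k i = ⋃ j, levelEdges G v (i + j * k)`, the union of every
`k`-th BFS level starting at level `i`. -/
def levelUnion {V : Type*} (G : SimpleGraph V) (v : V) (k i : ℕ) : Set (Sym2 V) :=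
  ⋃ j : ℕ, levelEdges G v (i + j * k)

section Aux

variable {V : Type*} [Fintype V]

private lemma finsum_mem_mono {α : Type*} (c : α → ℕ) {s t : Set α} (h : s ⊆ t)
    (ht : t.Finite) : (∑ᶠ e ∈ s, c e) ≤ ∑ᶠ e ∈ t, c e := by
  rw [finsum_mem_eq_sum c ((ht.subset h).inter_of_left _),
    finsum_mem_eq_sum c (ht.inter_of_left _)]
  apply Finset.sum_le_sum_of_subset
  intro x hx
  simp only [Set.Finite.mem_toFinset, Set.mem_inter_iff] at hx ⊢
  exact ⟨h hx.1, hx.2⟩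

private lemma finsum_union_le {α : Type*} [Finite α] (c : α → ℕ) (s t : Set α) :
    (∑ᶠ e ∈ s ∪ t, c e) ≤ (∑ᶠ e ∈ s, c e) + ∑ᶠ e ∈ t, c e := by
  rw [← Set.union_diff_self, finsum_mem_union disjoint_sdiff_self_right
    (Set.toFinite _) (Set.toFinite _)]
  exact Nat.add_le_add_left (finsum_mem_mono c Set.diff_subset (Set.toFinite t)) _

private lemma zero_mem_nuWSet (G : SimpleGraph V) (w : Sym2 V → ℕ) :
    (0 : ℕ) ∈ {n : ℕ | ∃ M : Set (Sym2 V), IsMatchingOn G M ∧ (∑ᶠ e ∈ M, w e) = n} :=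
  ⟨∅, ⟨Set.empty_subset _, fun e he => (Set.notMem_empty e he).elim⟩, finsum_mem_empty⟩

private lemma bddAbove_nuWSet (G : SimpleGraph V) (w : Sym2 V → ℕ) :
    BddAbove {n : ℕ | ∃ M : Set (Sym2 V), IsMatchingOn G M ∧ (∑ᶠ e ∈ M, w e) = n} := by
  refine ⟨∑ᶠ e ∈ (Set.univ : Set (Sym2 V)), w e, ?_⟩
  rintro n ⟨M, hM, rfl⟩
  exact finsum_mem_mono w (Set.subset_univ M) Set.finite_univ

private lemma le_nuW {G : SimpleGraph V} {w : Sym2 V → ℕ} {M : Set (Sym2 V)}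
    (hM : IsMatchingOn G M) : (∑ᶠ e ∈ M, w e) ≤ nuW G w :=
  le_csSup (bddAbove_nuWSet G w) ⟨M, hM, rfl⟩

private lemma nuW_le {G : SimpleGraph V} {w : Sym2 V → ℕ} {b : ℕ}
    (h : ∀ M, IsMatchingOn G M → (∑ᶠ e ∈ M, w e) ≤ b) : nuW G w ≤ b := by
  apply csSup_le ⟨0, zero_mem_nuWSet G w⟩
  rintro n ⟨M, hM, rfl⟩
  exact h M hM

private lemma nuW_mono {G₁ G₂ : SimpleGraph V} (h : G₁.edgeSet ⊆ G₂.edgeSet)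
    (w : Sym2 V → ℕ) : nuW G₁ w ≤ nuW G₂ w :=
  nuW_le fun _ hM => le_nuW ⟨hM.1.trans h, hM.2⟩

private lemma exists_nuW_matching (G : SimpleGraph V) (w : Sym2 V → ℕ) :
    ∃ M, IsMatchingOn G M ∧ (∑ᶠ e ∈ M, w e) = nuW G w :=
  Nat.sSup_mem ⟨0, zero_mem_nuWSet G w⟩ (bddAbove_nuWSet G w)

private lemma nuW_split (G : SimpleGraph V) (w : Sym2 V → ℕ) (F I1 I2 : Set (Sym2 V)) :
    nuW (G.deleteEdges (I1 ∪ I2)) w ≤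
      nuW ((SimpleGraph.fromEdgeSet (G.edgeSet \ F)).deleteEdges I1) w +
      nuW ((SimpleGraph.fromEdgeSet F).deleteEdges I2) w := by
  apply nuW_le
  intro M hM
  obtain ⟨hMsub, hMdisj⟩ := hM
  rw [SimpleGraph.edgeSet_deleteEdges] at hMsub
  have h1 : IsMatchingOn ((SimpleGraph.fromEdgeSet (G.edgeSet \ F)).deleteEdges I1) (M \ F) := by
    constructor
    · intro e he
      rw [SimpleGraph.edgeSet_deleteEdges, SimpleGraph.edgeSet_fromEdgeSet]
      have hsub := hMsub he.1
      exact ⟨⟨⟨hsub.1, he.2⟩, G.not_isDiag_of_mem_edgeSet hsub.1⟩,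
        fun hI1 => hsub.2 (Or.inl hI1)⟩
    · intro e he f hf hef
      exact hMdisj e he.1 f hf.1 hef
  have h2 : IsMatchingOn ((SimpleGraph.fromEdgeSet F).deleteEdges I2) (M ∩ F) := by
    constructor
    · intro e he
      rw [SimpleGraph.edgeSet_deleteEdges, SimpleGraph.edgeSet_fromEdgeSet]
      have hsub := hMsub he.1
      exact ⟨⟨he.2, G.not_isDiag_of_mem_edgeSet hsub.1⟩, fun hI2 => hsub.2 (Or.inr hI2)⟩
    · intro e he f hf hef
      exact hMdisj e he.1 f hf.1 hef
  calc (∑ᶠ e ∈ M, w e) = (∑ᶠ e ∈ M \ F, w e) + ∑ᶠ e ∈ M ∩ F, w e := by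
        rw [← finsum_mem_union Set.disjoint_sdiff_inter (Set.toFinite _) (Set.toFinite _),
          Set.diff_union_inter]
    _ ≤ _ := add_le_add (le_nuW h1) (le_nuW h2)

private lemma level_eq {G : SimpleGraph V} {v : V} {e : Sym2 V} {a b : ℕ}
    (ha : e ∈ levelEdges G v a) (hb : e ∈ levelEdges G v b) : a = b := by
  obtain ⟨-, x, y, rfl, hx, hy⟩ := ha
  obtain ⟨-, x', y', he', hx', hy'⟩ := hb
  rcases Sym2.eq_iff.mp he' with ⟨rfl, rfl⟩ | ⟨rfl, rfl⟩ <;> omega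

private lemma mem_levelUnion_rep {G : SimpleGraph V} {v : V} {k i : ℕ} {e : Sym2 V}
    (h : e ∈ levelUnion G v k i) : ∃ j, e ∈ levelEdges G v (i + j * k) :=
  Set.mem_iUnion.mp h

private lemma levelUnion_subset (G : SimpleGraph V) (v : V) (k i : ℕ) :
    levelUnion G v k i ⊆ G.edgeSet := by
  intro e he
  obtain ⟨j, hj⟩ := mem_levelUnion_rep he
  exact hj.1

private lemma levelUnion_inj {G : SimpleGraph V} {v : V} {k i i' : ℕ}
    (hi : i < k) (hi' : i' < k) {e : Sym2 V}
    (h : e ∈ levelUnion G v k i) (h' : e ∈ levelUnion G v k i') : i = i' := by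
  obtain ⟨j, hj⟩ := mem_levelUnion_rep h
  obtain ⟨j', hj'⟩ := mem_levelUnion_rep h'
  have heq := level_eq hj hj'
  have h1 : (i + j * k) % k = (i' + j' * k) % k := by rw [heq]
  rwa [Nat.add_mul_mod_self_right, Nat.add_mul_mod_self_right,
    Nat.mod_eq_of_lt hi, Nat.mod_eq_of_lt hi'] at h1

private lemma rep_level {G : SimpleGraph V} {v : V} {k i : ℕ} {x y : V}
    (h : s(x, y) ∈ levelUnion G v k i) (hxy : G.dist v y = G.dist v x + 1) :
    ∃ j, G.dist v x = i + j * k := by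
  obtain ⟨j, -, xe, ye, hee, hxe, hye⟩ := mem_levelUnion_rep h
  refine ⟨j, ?_⟩
  rcases Sym2.eq_iff.mp hee with ⟨rfl, rfl⟩ | ⟨rfl, rfl⟩ <;> omega

private lemma rep_level_mod {G : SimpleGraph V} {v : V} {k i : ℕ} {x y : V}
    (hik : i < k) (h : s(x, y) ∈ levelUnion G v k i)
    (hxy : G.dist v y = G.dist v x + 1) : G.dist v x % k = i := by
  obtain ⟨j, hj⟩ := rep_level h hxy
  rw [hj, Nat.add_mul_mod_self_right, Nat.mod_eq_of_lt hik]

private lemma rep_unique {G : SimpleGraph V} {v : V} {x y x' y' : V}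
    (h : s(x, y) = s(x', y')) (h1 : G.dist v y = G.dist v x + 1)
    (h2 : G.dist v y' = G.dist v x' + 1) : G.dist v x = G.dist v x' := by
  rcases Sym2.eq_iff.mp h with ⟨rfl, rfl⟩ | ⟨rfl, rfl⟩ <;> omega

/-- The union over the layer classes of layer matchings, restricted to edges whose
lower endpoint's distance satisfies `Q`. -/
private def layerSet (G : SimpleGraph V) (v : V) (k : ℕ) (Ms : ℕ → Set (Sym2 V))
    (Q : ℕ → Prop) : Set (Sym2 V) :=
  {e | ∃ i < k, e ∈ Ms i ∧ ∃ x y : V, e = s(x, y) ∧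
    G.dist v y = G.dist v x + 1 ∧ Q (G.dist v x)}

private lemma mem_layerSet {G : SimpleGraph V} {v : V} {k : ℕ} {Ms : ℕ → Set (Sym2 V)}
    {Q : ℕ → Prop} {e : Sym2 V} :
    e ∈ layerSet G v k Ms Q ↔ ∃ i < k, e ∈ Ms i ∧ ∃ x y : V, e = s(x, y) ∧
      G.dist v y = G.dist v x + 1 ∧ Q (G.dist v x) := Iff.rfl

private lemma combine_matching {G : SimpleGraph V} {v : V} {k : ℕ} {I : Set (Sym2 V)}
    {Ms : ℕ → Set (Sym2 V)}
    (hsub : ∀ i < k, Ms i ⊆ levelUnion G v k i)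
    (hmat : ∀ i < k, IsMatchingOn (G.deleteEdges I) (Ms i))
    (Q : ℕ → Prop) (hQ : ∀ n, Q n → Q (n + 1) → False) :
    IsMatchingOn (G.deleteEdges I) (layerSet G v k Ms Q) := by
  constructor
  · rintro e ⟨i, hik, hei, -⟩
    exact (hmat i hik).1 hei
  · rintro e ⟨i, hik, hei, x, y, rfl, hxy, hQx⟩ f ⟨i', hik', hfi', x', y', rfl, hxy', hQx'⟩
      hef z hze hzf
    have hxi : G.dist v x % k = i := rep_level_mod hik (hsub i hik hei) hxy
    have hxi' : G.dist v x' % k = i' := rep_level_mod hik' (hsub i' hik' hfi') hxy'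
    have key : G.dist v x = G.dist v x' → False := by
      intro hdd
      have hii : i = i' := by rw [← hxi, ← hxi', hdd]
      subst hii
      exact (hmat i hik).2 _ hei _ hfi' hef z hze hzf
    rcases Sym2.mem_iff.mp hze with hz1 | hz1 <;> rcases Sym2.mem_iff.mp hzf with hz2 | hz2
    · exact key (by rw [← hz1, ← hz2])
    · have hd : G.dist v x = G.dist v x' + 1 := by rw [← hz1, hz2, hxy']
      exact hQ _ hQx' (hd ▸ hQx)
    · have hd : G.dist v x' = G.dist v x + 1 := by rw [← hz2, hz1, hxy]
      exact hQ _ hQx (hd ▸ hQx')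
    · have hd : G.dist v y = G.dist v y' := by rw [← hz1, hz2]
      exact key (by omega)

private lemma sum_layers_le {G : SimpleGraph V} {v : V} {k : ℕ} {I : Set (Sym2 V)}
    (w : Sym2 V → ℕ) {Ms : ℕ → Set (Sym2 V)}
    (hsub : ∀ i < k, Ms i ⊆ levelUnion G v k i)
    (hmat : ∀ i < k, IsMatchingOn (G.deleteEdges I) (Ms i)) :
    (∑ i ∈ Finset.range k, ∑ᶠ e ∈ Ms i, w e) ≤ 2 * nuW (G.deleteEdges I) w := by
  have h1 := combine_matching hsub hmat Even (fun n h1 h2 => (Nat.even_add_one.mp h2) h1)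
  have h2 := combine_matching hsub hmat (fun n => ¬ Even n)
    (fun n h1 h2 => h2 (Nat.even_add_one.mpr h1))
  have hdisj : (↑(Finset.range k) : Set ℕ).PairwiseDisjoint Ms := by
    intro i hi i' hi' hne
    simp only [Finset.coe_range, Set.mem_Iio] at hi hi'
    exact Set.disjoint_left.mpr fun e he he' =>
      hne (levelUnion_inj hi hi' (hsub i hi he) (hsub i' hi' he'))
  have hbi := finsum_mem_biUnion (f := w) hdisj (Set.toFinite _) (fun i _ => Set.toFinite _)
  rw [finsum_mem_coe_finset] at hbi
  have hUeq : (⋃ i ∈ (↑(Finset.range k) : Set ℕ), Ms i) =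
      layerSet G v k Ms Even ∪ layerSet G v k Ms (fun n => ¬ Even n) := by
    ext e
    constructor
    · intro he
      obtain ⟨i, hik, hei⟩ := by
        simpa only [Set.mem_iUnion, Finset.coe_range, Set.mem_Iio, exists_prop] using he
      obtain ⟨j, -, x, y, rfl, hx, hy⟩ := mem_levelUnion_rep (hsub i hik hei)
      by_cases hE : Even (G.dist v x)
      · exact Or.inl ⟨i, hik, hei, x, y, rfl, by omega, hE⟩
      · exact Or.inr ⟨i, hik, hei, x, y, rfl, by omega, hE⟩
    · rintro (⟨i, hik, hei, -⟩ | ⟨i, hik, hei, -⟩) <;>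
        exact Set.mem_biUnion (by simpa using hik) hei
  have hM12 : Disjoint (layerSet G v k Ms Even) (layerSet G v k Ms (fun n => ¬ Even n)) := by
    apply Set.disjoint_left.mpr
    rintro e ⟨i, hik, hei, x, y, rfl, hxy, hQx⟩ ⟨i', hik', hei', x', y', he', hxy', hQx'⟩
    exact hQx' ((rep_unique he' hxy hxy') ▸ hQx)
  have hkey : (∑ i ∈ Finset.range k, ∑ᶠ e ∈ Ms i, w e) =
      (∑ᶠ e ∈ layerSet G v k Ms Even, w e) +
      ∑ᶠ e ∈ layerSet G v k Ms (fun n => ¬ Even n), w e := by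
    rw [← hbi, hUeq, finsum_mem_union hM12 (Set.toFinite _) (Set.toFinite _)]
  rw [hkey, two_mul]
  exact add_le_add (le_nuW h1) (le_nuW h2)

end Aux

/-- Approximation guarantee of the pseudo-PTAS for maximum matching interdiction:
for any interdiction set `I` of cost at most `B`, there exists a BFS layer class
`i < k` such that combining any interdiction set `Î₁` that is (budget-wise and
objective-wise) at least as good as `I \ Fᵢ` on `Gᵢ` with any interdiction set `Î₂`
at least as good as `I ∩ Fᵢ` on `Hᵢ` yields an interdiction set of cost at most `B`
whose objective value is within a factor `(k + 2)/k` of that of `I`. -/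
theorem matching_interdiction_approx {V : Type*} [Fintype V] (G : SimpleGraph V)
    (hG : G.Connected) (w c : Sym2 V → ℕ) (B : ℕ)
    (I : Set (Sym2 V)) (hIsub : I ⊆ G.edgeSet) (hIc : (∑ᶠ e ∈ I, c e) ≤ B)
    (v : V) (k : ℕ) (hk : 1 < k) :
    ∃ i < k,
      ∀ I1 I2 : Set (Sym2 V),
        I1 ⊆ G.edgeSet \ levelUnion G v k i →
        I2 ⊆ levelUnion G v k i →
        (∑ᶠ e ∈ I1, c e) ≤ (∑ᶠ e ∈ (I \ levelUnion G v k i), c e) →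
        (∑ᶠ e ∈ I2, c e) ≤ (∑ᶠ e ∈ (I ∩ levelUnion G v k i), c e) →
        nuW ((SimpleGraph.fromEdgeSet (G.edgeSet \ levelUnion G v k i)).deleteEdges I1) w ≤
          nuW ((SimpleGraph.fromEdgeSet (G.edgeSet \ levelUnion G v k i)).deleteEdges
            (I \ levelUnion G v k i)) w →
        nuW ((SimpleGraph.fromEdgeSet (levelUnion G v k i)).deleteEdges I2) w ≤
          nuW ((SimpleGraph.fromEdgeSet (levelUnion G v k i)).deleteEdges
            (I ∩ levelUnion G v k i)) w →
        (∑ᶠ e ∈ (I1 ∪ I2), c e) ≤ B ∧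
          k * nuW (G.deleteEdges (I1 ∪ I2)) w ≤ (k + 2) * nuW (G.deleteEdges I) w := by
  classical
  -- choose optimal matchings in each layer graph `H_i \ (I ∩ F_i)`
  choose Ms hMs using fun i : ℕ => exists_nuW_matching
    ((SimpleGraph.fromEdgeSet (levelUnion G v k i)).deleteEdges (I ∩ levelUnion G v k i)) w
  have hsub : ∀ i < k, Ms i ⊆ levelUnion G v k i := by
    intro i hik e he
    have h := (hMs i).1.1 he
    rw [SimpleGraph.edgeSet_deleteEdges, SimpleGraph.edgeSet_fromEdgeSet] at h
    exact h.1.1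
  have hmat : ∀ i < k, IsMatchingOn (G.deleteEdges I) (Ms i) := by
    intro i hik
    refine ⟨fun e he => ?_, (hMs i).1.2⟩
    have h := (hMs i).1.1 he
    rw [SimpleGraph.edgeSet_deleteEdges, SimpleGraph.edgeSet_fromEdgeSet] at h
    rw [SimpleGraph.edgeSet_deleteEdges]
    exact ⟨levelUnion_subset G v k i h.1.1, fun hI => h.2 ⟨hI, h.1.1⟩⟩
  have hsum : (∑ i ∈ Finset.range k,
      nuW ((SimpleGraph.fromEdgeSet (levelUnion G v k i)).deleteEdges
        (I ∩ levelUnion G v k i)) w) ≤ 2 * nuW (G.deleteEdges I) w := by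
    have heq : (∑ i ∈ Finset.range k,
        nuW ((SimpleGraph.fromEdgeSet (levelUnion G v k i)).deleteEdges
          (I ∩ levelUnion G v k i)) w) = ∑ i ∈ Finset.range k, ∑ᶠ e ∈ Ms i, w e :=
      Finset.sum_congr rfl fun i _ => ((hMs i).2).symm
    rw [heq]
    exact sum_layers_le w hsub hmat
  obtain ⟨i₀, hi₀mem, hi₀min⟩ := Finset.exists_min_image (Finset.range k)
    (fun i => nuW ((SimpleGraph.fromEdgeSet (levelUnion G v k i)).deleteEdges
      (I ∩ levelUnion G v k i)) w) ⟨0, Finset.mem_range.mpr (by omega)⟩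
  have hi₀k : i₀ < k := Finset.mem_range.mp hi₀mem
  have hkA : k * nuW ((SimpleGraph.fromEdgeSet (levelUnion G v k i₀)).deleteEdges
      (I ∩ levelUnion G v k i₀)) w ≤ 2 * nuW (G.deleteEdges I) w := by
    calc k * nuW ((SimpleGraph.fromEdgeSet (levelUnion G v k i₀)).deleteEdges
          (I ∩ levelUnion G v k i₀)) w
        = ∑ _i ∈ Finset.range k, nuW ((SimpleGraph.fromEdgeSet
            (levelUnion G v k i₀)).deleteEdges (I ∩ levelUnion G v k i₀)) w := by
          simp [Finset.sum_const, Finset.card_range, mul_comm]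
      _ ≤ ∑ i ∈ Finset.range k, nuW ((SimpleGraph.fromEdgeSet
            (levelUnion G v k i)).deleteEdges (I ∩ levelUnion G v k i)) w :=
          Finset.sum_le_sum fun i hi => hi₀min i hi
      _ ≤ 2 * nuW (G.deleteEdges I) w := hsum
  refine ⟨i₀, hi₀k, ?_⟩
  intro I1 I2 hI1sub hI2sub hc1 hc2 hn1 hn2
  constructor
  · calc (∑ᶠ e ∈ I1 ∪ I2, c e) ≤ (∑ᶠ e ∈ I1, c e) + ∑ᶠ e ∈ I2, c e :=
        finsum_union_le c I1 I2
      _ ≤ (∑ᶠ e ∈ (I \ levelUnion G v k i₀), c e) +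
          ∑ᶠ e ∈ (I ∩ levelUnion G v k i₀), c e := add_le_add hc1 hc2
      _ = ∑ᶠ e ∈ I, c e := by
          rw [← finsum_mem_union Set.disjoint_sdiff_inter (Set.toFinite _) (Set.toFinite _),
            Set.diff_union_inter]
      _ ≤ B := hIc
  · have hsplit := nuW_split G w (levelUnion G v k i₀) I1 I2
    have hGle : nuW ((SimpleGraph.fromEdgeSet (G.edgeSet \ levelUnion G v k i₀)).deleteEdges
        (I \ levelUnion G v k i₀)) w ≤ nuW (G.deleteEdges I) w := by
      apply nuW_mono _ w
      intro e he
      rw [SimpleGraph.edgeSet_deleteEdges, SimpleGraph.edgeSet_fromEdgeSet] at he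
      rw [SimpleGraph.edgeSet_deleteEdges]
      exact ⟨he.1.1.1, fun hI => he.2 ⟨hI, he.1.1.2⟩⟩
    have hchain : nuW (G.deleteEdges (I1 ∪ I2)) w ≤
        nuW (G.deleteEdges I) w +
        nuW ((SimpleGraph.fromEdgeSet (levelUnion G v k i₀)).deleteEdges
          (I ∩ levelUnion G v k i₀)) w :=
      hsplit.trans (add_le_add (hn1.trans hGle) hn2)
    calc k * nuW (G.deleteEdges (I1 ∪ I2)) w
        ≤ k * (nuW (G.deleteEdges I) w +
            nuW ((SimpleGraph.fromEdgeSet (levelUnion G v k i₀)).deleteEdges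
              (I ∩ levelUnion G v k i₀)) w) := Nat.mul_le_mul_left k hchain
      _ = k * nuW (G.deleteEdges I) w +
          k * nuW ((SimpleGraph.fromEdgeSet (levelUnion G v k i₀)).deleteEdges
            (I ∩ levelUnion G v k i₀)) w := by ring
      _ ≤ k * nuW (G.deleteEdges I) w + 2 * nuW (G.deleteEdges I) w := by omega
      _ = (k + 2) * nuW (G.deleteEdges I) w := by ring
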